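/- Orthogonality of multivariate Krawtchouk matrices: if A satisfies the K-condition A* p A = D, then for every degree N the Krawtchouk matrix Φ = (Ā)* satisfies Φ · B p̄ · Φ* = B D̄, where B is the diagonal matrix of multinomial coefficients of degree N and p̄, D̄ are the N-th symmetric powers of p and D (which are diagonal with entries p^m, D^m respectively). -/

import Mathlib

open MvPolynomial Matrix BigOperators

/-- Multi-indices of `d+1` entries with total degree `N`. -/
abbrev MIdx (d N : ℕ) := {m : Fin (d+1) → ℕ // ∑ i, m i = N}

instance (d N : ℕ) : Fintype (MIdx d N) :=
  Fintype.subtype (Finset.Nat.antidiagonalTuple (d+1) N)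
    (fun _ => Finset.Nat.mem_antidiagonalTuple)

/-- The `(m,n)` matrix element of the symmetric power of `A`:
the coefficient of `x^n` in `(Ax)^m`. -/
noncomputable def symPowEntry {R : Type} [CommSemiring R] {d : ℕ}
    (A : Matrix (Fin (d+1)) (Fin (d+1)) R) (m n : Fin (d+1) → ℕ) : R :=
  MvPolynomial.coeff (Finsupp.equivFunOnFinite.symm n)
    (∏ i, (∑ j, MvPolynomial.C (A i j) * MvPolynomial.X j) ^ m i)

/-- The `N`-th symmetric power of `A`, as a matrix indexed by multi-indices
of total degree `N`. -/
noncomputable def symPow {R : Type} [CommSemiring R] (d N : ℕ)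
    (A : Matrix (Fin (d+1)) (Fin (d+1)) R) : Matrix (MIdx d N) (MIdx d N) R :=
  fun m n => symPowEntry A m.1 n.1

/-- `Γ(g)_{mn}`: the coefficient of `x^n` in `(Σ_{μ,λ} g_{μλ} x_λ ∂_μ) x^m`. -/
noncomputable def gammaEntry {d : ℕ} (g : Matrix (Fin (d+1)) (Fin (d+1)) ℂ)
    (m n : Fin (d+1) → ℕ) : ℂ :=
  MvPolynomial.coeff (Finsupp.equivFunOnFinite.symm n)
    (∑ μ, ∑ lam, MvPolynomial.C (g μ lam) *
      (MvPolynomial.X lam * MvPolynomial.pderiv μ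
        (MvPolynomial.monomial (Finsupp.equivFunOnFinite.symm m) 1)))

/-- The degree-`N` generator `Γ(g)` of the symmetric representation. -/
noncomputable def gammaMat (d N : ℕ) (g : Matrix (Fin (d+1)) (Fin (d+1)) ℂ) :
    Matrix (MIdx d N) (MIdx d N) ℂ :=
  fun m n => gammaEntry g m.1 n.1

/-- The diagonal matrix `B` of multinomial coefficients of degree `N`. -/
noncomputable def multinomMat (d N : ℕ) : Matrix (MIdx d N) (MIdx d N) ℂ :=
  Matrix.diagonal fun m => (Nat.multinomial Finset.univ m.1 : ℂ)

lemma symPowEntry_map {R S : Type} [CommSemiring R] [CommSemiring S] (f : R →+* S) {d : ℕ}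
    (A : Matrix (Fin (d+1)) (Fin (d+1)) R) (m n : Fin (d+1) → ℕ) :
    symPowEntry (A.map f) m n = f (symPowEntry A m n) := by
  unfold symPowEntry
  rw [← MvPolynomial.coeff_map]
  congr 1
  simp [map_prod, map_pow, map_sum, Matrix.map_apply]

lemma prod_X_pow {R : Type} [CommSemiring R] {d : ℕ} (k : Fin (d+1) → ℕ) :
    (∏ i, (MvPolynomial.X i : MvPolynomial (Fin (d+1)) R) ^ k i)
      = MvPolynomial.monomial (Finsupp.equivFunOnFinite.symm k) 1 := by
  rw [MvPolynomial.monomial_eq, Finsupp.prod_fintype]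
  · simp
  · intro i; simp

lemma key_identity {d N : ℕ} (Ac A : Matrix (Fin (d+1)) (Fin (d+1)) ℂ)
    (v w : Fin (d+1) → ℂ)
    (h1 : ∀ j l, (∑ i, Ac i j * v i * A i l) = if j = l then w j else 0)
    (m n : Fin (d+1) → ℕ) (hm : ∑ i, m i = N) (hn : ∑ i, n i = N) :
    ∑ k ∈ Finset.piAntidiag Finset.univ N,
        (Nat.multinomial Finset.univ k : ℂ) * (∏ i, v i ^ k i)
          * symPowEntry Ac k m * symPowEntry A k n
      = if m = n then (Nat.multinomial Finset.univ m : ℂ) * ∏ i, w i ^ m i else 0 := by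
  classical
  set mh := Finsupp.equivFunOnFinite.symm m with hmh
  set nh := Finsupp.equivFunOnFinite.symm n with hnh
  set T : MvPolynomial (Fin (d+1)) (MvPolynomial (Fin (d+1)) ℂ) :=
    (∑ i, C (C (v i)) * ((∑ j, C (C (Ac i j)) * X j) * C (∑ l, C (A i l) * X l))) ^ N with hT
  have claim1 : (∑ i, (C (C (v i)) * ((∑ j, C (C (Ac i j)) * X j) * C (∑ l, C (A i l) * X l))
        : MvPolynomial (Fin (d+1)) (MvPolynomial (Fin (d+1)) ℂ)))
      = ∑ j, C (C (w j)) * (X j * C (X j)) := by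
    have e1 : ∀ i, (C (C (v i)) * ((∑ j, C (C (Ac i j)) * X j) * C (∑ l, C (A i l) * X l))
          : MvPolynomial (Fin (d+1)) (MvPolynomial (Fin (d+1)) ℂ))
        = ∑ j, ∑ l, C (C (Ac i j * v i * A i l)) * (X j * C (X l)) := by
      intro i
      have hc : (C (∑ l, C (A i l) * X l)
          : MvPolynomial (Fin (d+1)) (MvPolynomial (Fin (d+1)) ℂ))
          = ∑ l, C (C (A i l)) * C (X l) := by
        rw [map_sum]
        exact Finset.sum_congr rfl fun l _ => by rw [_root_.map_mul]
      rw [hc, Finset.sum_mul_sum, Finset.mul_sum]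
      refine Finset.sum_congr rfl fun j _ => ?_
      rw [Finset.mul_sum]
      refine Finset.sum_congr rfl fun l _ => ?_
      simp only [_root_.map_mul]
      ring
    rw [Finset.sum_congr rfl fun i _ => e1 i, Finset.sum_comm]
    refine Finset.sum_congr rfl fun j _ => ?_
    rw [Finset.sum_comm]
    have e2 : ∀ l, (∑ i, C (C (Ac i j * v i * A i l)) *
        (X j * C (X l) : MvPolynomial (Fin (d+1)) (MvPolynomial (Fin (d+1)) ℂ)))
        = C (C (if j = l then w j else 0)) * (X j * C (X l)) := by
      intro l
      rw [← Finset.sum_mul, ← map_sum, ← map_sum, h1 j l]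
    rw [Finset.sum_congr rfl fun l _ => e2 l]
    simp [apply_ite, Finset.sum_ite_eq]
  -- LHS coefficient computation
  have lhs_eq : coeff nh (coeff mh T)
      = ∑ k ∈ Finset.piAntidiag Finset.univ N,
        (Nat.multinomial Finset.univ k : ℂ) * (∏ i, v i ^ k i)
          * symPowEntry Ac k m * symPowEntry A k n := by
    rw [hT, Finset.sum_pow_eq_sum_piAntidiag, coeff_sum, coeff_sum]
    refine Finset.sum_congr rfl fun k hk => ?_
    have hprod : (↑(Nat.multinomial Finset.univ k) *
          ∏ i, (C (C (v i)) * ((∑ j, C (C (Ac i j)) * X j) * C (∑ l, C (A i l) * X l))) ^ k i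
        : MvPolynomial (Fin (d+1)) (MvPolynomial (Fin (d+1)) ℂ))
        = C (C ((Nat.multinomial Finset.univ k : ℂ) * ∏ i, v i ^ k i)) *
          ((∏ i, (∑ j, C (C (Ac i j)) * X j) ^ k i) *
            C (∏ i, (∑ l, C (A i l) * X l) ^ k i)) := by
      simp only [mul_pow, Finset.prod_mul_distrib, _root_.map_mul, map_prod, map_pow,
        map_natCast]
      push_cast
      ring
    have e3 : coeff mh (∏ i, ((∑ j, C (C (Ac i j)) * X j)
        : MvPolynomial (Fin (d+1)) (MvPolynomial (Fin (d+1)) ℂ)) ^ k i)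
        = C (symPowEntry Ac k m) := by
      rw [← symPowEntry_map (C : ℂ →+* MvPolynomial (Fin (d+1)) ℂ) Ac k m]
      rfl
    have e4 : coeff nh (∏ i, ((∑ l, C (A i l) * X l)
        : MvPolynomial (Fin (d+1)) ℂ) ^ k i) = symPowEntry A k n := rfl
    rw [hprod, coeff_C_mul, mul_comm (∏ i, (∑ j, C (C (Ac i j)) * X j) ^ k i) (C _)]
    rw [coeff_C_mul, coeff_C_mul, e3]
    rw [mul_comm (∏ i, (∑ l, C (A i l) * X l) ^ k i) (C _), coeff_C_mul, e4]
    ring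
  -- RHS coefficient computation
  have rhs_eq : coeff nh (coeff mh T)
      = if m = n then (Nat.multinomial Finset.univ m : ℂ) * ∏ i, w i ^ m i else 0 := by
    rw [hT, claim1, Finset.sum_pow_eq_sum_piAntidiag, coeff_sum, coeff_sum]
    have eterm : ∀ k : Fin (d+1) → ℕ,
        (↑(Nat.multinomial Finset.univ k) * ∏ j, (C (C (w j)) * (X j * C (X j))) ^ k j
          : MvPolynomial (Fin (d+1)) (MvPolynomial (Fin (d+1)) ℂ))
        = C (C ((Nat.multinomial Finset.univ k : ℂ) * ∏ j, w j ^ k j)) *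
          (monomial (Finsupp.equivFunOnFinite.symm k) 1 *
            C (monomial (Finsupp.equivFunOnFinite.symm k) 1)) := by
      intro k
      simp only [mul_pow, Finset.prod_mul_distrib, _root_.map_mul, map_prod, map_pow,
        map_natCast, ← _root_.prod_X_pow]
      push_cast
      ring
    rw [Finset.sum_congr rfl fun k _ => congrArg (coeff nh) (congrArg (coeff mh) (eterm k))]
    have eco : ∀ k : Fin (d+1) → ℕ,
        coeff nh (coeff mh (C (C ((Nat.multinomial Finset.univ k : ℂ) * ∏ j, w j ^ k j)) *
          (monomial (Finsupp.equivFunOnFinite.symm k) 1 *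
            C (monomial (Finsupp.equivFunOnFinite.symm k) 1)
            : MvPolynomial (Fin (d+1)) (MvPolynomial (Fin (d+1)) ℂ))))
        = if k = m then (if k = n then
            (Nat.multinomial Finset.univ k : ℂ) * ∏ j, w j ^ k j else 0) else 0 := by
      intro k
      rw [coeff_C_mul, mul_comm (monomial (Finsupp.equivFunOnFinite.symm k) 1) (C _),
        coeff_C_mul, coeff_C_mul]
      simp only [coeff_monomial, hmh, hnh, EmbeddingLike.apply_eq_iff_eq,
        mul_ite, ite_mul, mul_one, mul_zero, zero_mul, one_mul, coeff_zero,
        apply_ite (coeff nh), apply_ite (coeff (Finsupp.equivFunOnFinite.symm n))]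
    rw [Finset.sum_congr rfl fun k _ => eco k]
    rw [Finset.sum_ite_eq' (Finset.piAntidiag Finset.univ N) m]
    have hmmem : m ∈ Finset.piAntidiag Finset.univ N := by
      simp [Finset.mem_piAntidiag, hm]
    simp [hmmem]
  rw [← lhs_eq, rhs_eq]

lemma symPowEntry_diagonal {R : Type} [CommRing R] {d : ℕ} (v : Fin (d+1) → R)
    (m n : Fin (d+1) → ℕ) :
    symPowEntry (Matrix.diagonal v) m n = if n = m then ∏ i, v i ^ m i else 0 := by
  unfold symPowEntry
  have h1 : ∀ i : Fin (d+1), (∑ j, MvPolynomial.C ((Matrix.diagonal v) i j) * MvPolynomial.X j)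
      = MvPolynomial.C (v i) * (MvPolynomial.X i : MvPolynomial (Fin (d+1)) R) := by
    intro i
    rw [Finset.sum_eq_single i]
    · simp
    · intro j _ hj; simp [Matrix.diagonal_apply_ne' v hj]
    · simp
  simp_rw [h1, mul_pow, Finset.prod_mul_distrib, ← map_pow, ← map_prod]
  have h2 : (∏ i, (MvPolynomial.X i : MvPolynomial (Fin (d+1)) R) ^ m i)
      = MvPolynomial.monomial (Finsupp.equivFunOnFinite.symm m) 1 := by
    rw [MvPolynomial.monomial_eq, Finsupp.prod_fintype]
    · simp
    · intro i; simp
  rw [h2, MvPolynomial.coeff_C_mul, MvPolynomial.coeff_monomial]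
  by_cases h : n = m
  · subst h; simp
  · have : Finsupp.equivFunOnFinite.symm m ≠ Finsupp.equivFunOnFinite.symm n := by
      intro hc; exact h (Equiv.injective _ hc).symm
    simp [this, h]

/-- Orthogonality of multivariate Krawtchouk matrices: under the K-condition
`A* p A = D`, the Krawtchouk matrix `Φ = (Ā)*` satisfies
`Φ · B p̄ · Φ* = B D̄`. -/
theorem krawtchouk_orthogonality (d N : ℕ)
    (A : Matrix (Fin (d+1)) (Fin (d+1)) ℂ)
    (p Dv : Fin (d+1) → ℝ) (hp : ∀ i, 0 < p i) (hp1 : ∑ i, p i = 1)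
    (hD : ∀ i, 0 < Dv i)
    (hK : Aᴴ * Matrix.diagonal (fun i => (p i : ℂ)) * A
      = Matrix.diagonal fun i => (Dv i : ℂ)) :
    ∀ Φ : Matrix (MIdx d N) (MIdx d N) ℂ,
      Φ = (symPow d N A)ᴴ →
      Φ * (multinomMat d N * symPow d N (Matrix.diagonal fun i => (p i : ℂ))) * Φᴴ
        = multinomMat d N * symPow d N (Matrix.diagonal fun i => (Dv i : ℂ)) := by
  classical
  classical
  intro Φ hΦ
  subst hΦ
  rw [Matrix.conjTranspose_conjTranspose]
  set v : Fin (d+1) → ℂ := fun i => (p i : ℂ) with hv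
  set w : Fin (d+1) → ℂ := fun i => (Dv i : ℂ) with hw
  set Ac := A.map (starRingEnd ℂ) with hAc
  have h1 : ∀ j l, (∑ i, Ac i j * v i * A i l) = if j = l then w j else 0 := by
    intro j l
    have h2 := congrFun (congrFun hK j) l
    simp only [Matrix.mul_apply, Matrix.mul_diagonal, Matrix.conjTranspose_apply,
      Matrix.diagonal_apply, mul_ite, mul_zero, Finset.sum_ite_eq', Finset.mem_univ,
      if_true] at h2
    simp only [hAc, Matrix.map_apply, starRingEnd_apply]
    exact h2
  have hY : ∀ (u : Fin (d+1) → ℂ) (k l : MIdx d N),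
      (multinomMat d N * symPow d N (Matrix.diagonal u)) k l
        = if k = l then (Nat.multinomial Finset.univ k.1 : ℂ) * ∏ i, u i ^ k.1 i else 0 := by
    intro u k l
    rw [multinomMat, Matrix.diagonal_mul]
    show _ * symPowEntry (Matrix.diagonal u) k.1 l.1 = _
    rw [symPowEntry_diagonal]
    by_cases h : k = l
    · subst h; simp
    · have : ¬ (l.1 = k.1) := fun hc => h (Subtype.ext hc.symm)
      simp [h, this]
  ext m n
  have hstar : ∀ (l : MIdx d N), ((symPow d N A)ᴴ) m l = symPowEntry Ac l.1 m.1 := by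
    intro l
    rw [Matrix.conjTranspose_apply]
    show star (symPowEntry A l.1 m.1) = _
    rw [hAc, symPowEntry_map, starRingEnd_apply]
  have hL1 : ((symPow d N A)ᴴ * (multinomMat d N * symPow d N (Matrix.diagonal v))
        * symPow d N A) m n
      = ∑ l : MIdx d N, symPowEntry Ac l.1 m.1 *
          ((Nat.multinomial Finset.univ l.1 : ℂ) * ∏ i, v i ^ l.1 i)
          * symPowEntry A l.1 n.1 := by
    rw [Matrix.mul_apply]
    refine Finset.sum_congr rfl fun l _ => ?_
    rw [Matrix.mul_apply]
    have : ∀ k : MIdx d N, ((symPow d N A)ᴴ) m k *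
        (multinomMat d N * symPow d N (Matrix.diagonal v)) k l
        = if k = l then symPowEntry Ac k.1 m.1 *
            ((Nat.multinomial Finset.univ k.1 : ℂ) * ∏ i, v i ^ k.1 i) else 0 := by
      intro k
      rw [hY v, hstar]
      by_cases h : k = l <;> simp [h]
    rw [Finset.sum_congr rfl fun k _ => this k]
    rw [Finset.sum_ite_eq' Finset.univ l]
    simp [symPow]
  rw [hL1, hY w]
  have hmem : ∀ x : Fin (d+1) → ℕ,
      x ∈ Finset.piAntidiag Finset.univ N ↔ (∑ i, x i = N) := by
    intro x
    simp [Finset.mem_piAntidiag]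
  have hsum := key_identity Ac A v w h1 m.1 n.1 m.2 n.2
  rw [Finset.sum_subtype _ hmem
    (fun k => (Nat.multinomial Finset.univ k : ℂ) * (∏ i, v i ^ k i)
      * symPowEntry Ac k m.1 * symPowEntry A k n.1)] at hsum
  rw [show (∑ l : MIdx d N, symPowEntry Ac l.1 m.1 *
      ((Nat.multinomial Finset.univ l.1 : ℂ) * ∏ i, v i ^ l.1 i) * symPowEntry A l.1 n.1)
    = ∑ l : MIdx d N, (Nat.multinomial Finset.univ l.1 : ℂ) * (∏ i, v i ^ l.1 i)
      * symPowEntry Ac l.1 m.1 * symPowEntry A l.1 n.1 from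
    Finset.sum_congr rfl fun l _ => by ring]
  rw [hsum]
  by_cases h : m = n
  · subst h; simp
  · have h' : ¬ (m.1 = n.1) := fun hc => h (Subtype.ext hc)
    simp [h, h']
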